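/- If the set function f : 2^V → ℝ≥0 is monotone, (γ,β)-weakly submodular for some γ ∈ (0,1] and β ≥ 1, and satisfies f(∅) = 0, then, writing φ = β(1−γ) + γ², for every point x = (p_1,…,p_K) ∈ ∏_{k=1}^K Δ_{n_k} and every feasible subset S ⊆ V, one has ⟨ Σ_{k=1}^K (1/B_k)·1_{S∩V_k} − x, ∫_0^1 e^{φ(z−1)} ∇F(z·x) dz ⟩ ≥ (γ²(1 − e^{−φ})/φ)·f(S) − F(x). -/

import Mathlib

open Finset

noncomputable section

namespace Multinoulli

variable {K : ℕ}

/-- An element of the ground set `V`: a community index `k` together with the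
index `m` of the element `v_k^m` inside its community `V_k`. -/
abbrev Elem (n : Fin K → ℕ) := Σ k : Fin K, Fin (n k)

/-- A sampling slot: a community `k` together with a trial index `b ∈ {1,…,B_k}`. -/
abbrev Slot (B : Fin K → ℕ) := Σ k : Fin K, Fin (B k)

/-- A joint outcome of all the independent multinoulli trials; `none` encodes a
draw of `∅`, which contributes no element. -/
abbrev Choice (n B : Fin K → ℕ) := ∀ s : Slot B, Option (Fin (n s.1))

/-- The probability that `Multi(p_k)` (the `k`-th block of `x`) assigns to a given
outcome: `x ⟨k,m⟩` for the element `v_k^m` and `1 - Σ_m x ⟨k,m⟩` for `∅`. -/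
def prob (n : Fin K → ℕ) (x : Elem n → ℝ) (k : Fin K) : Option (Fin (n k)) → ℝ
  | some m => x ⟨k, m⟩
  | none => 1 - ∑ m : Fin (n k), x ⟨k, m⟩

/-- The probability of the joint outcome `e` (all trials are mutually independent). -/
def jointProb (n B : Fin K → ℕ) (x : Elem n → ℝ) (e : Choice n B) : ℝ :=
  ∏ s : Slot B, prob n x s.1 (e s)

/-- The subset of the ground set selected by the trials whose slot lies in `A`
(a draw of `∅` contributes no element to the union). -/
def chosen (n B : Fin K → ℕ) (e : Choice n B) (A : Finset (Slot B)) : Finset (Elem n) :=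
  A.biUnion fun s => ((e s).map fun m => (⟨s.1, m⟩ : Elem n)).toFinset

/-- The Multinoulli Extension `F` of the set function `f`:
`F(x) = E[f(∪_{k,b} {e_k^b})]` for mutually independent `e_k^b ∼ Multi(p_k)`. -/
def ME (n B : Fin K → ℕ) (f : Finset (Elem n) → ℝ) (x : Elem n → ℝ) : ℝ :=
  ∑ e : Choice n B, f (chosen n B e Finset.univ) * jointProb n B x e

/-- The first-order partial derivative `∂G/∂x_i` at `x`. -/
def pderiv (n : Fin K → ℕ) (G : (Elem n → ℝ) → ℝ) (i : Elem n) (x : Elem n → ℝ) : ℝ :=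
  deriv (fun t => G (Function.update x i t)) (x i)

/-- The gradient `∇G(x)`. -/
def grad (n : Fin K → ℕ) (G : (Elem n → ℝ) → ℝ) (x : Elem n → ℝ) : Elem n → ℝ :=
  fun i => pderiv n G i x

/-- The second-order partial derivative `∂²G/∂x_i∂x_j` at `x`. -/
def pderiv2 (n : Fin K → ℕ) (G : (Elem n → ℝ) → ℝ) (i j : Elem n) (x : Elem n → ℝ) : ℝ :=
  pderiv n (fun y => pderiv n G j y) i x

/-- The Euclidean inner product on `∏_k ℝ^{n_k}`. -/
def inner' (n : Fin K → ℕ) (u v : Elem n → ℝ) : ℝ := ∑ i : Elem n, u i * v i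

/-- Membership in the product of simplices `∏_{k=1}^K Δ_{n_k}`. -/
def InSimplex (n : Fin K → ℕ) (x : Elem n → ℝ) : Prop :=
  (∀ i, 0 ≤ x i) ∧ ∀ k : Fin K, ∑ m : Fin (n k), x ⟨k, m⟩ ≤ 1

/-- Feasibility for the partition constraint: `|S ∩ V_k| ≤ B_k` for all `k`. -/
def Feasible (n B : Fin K → ℕ) (S : Finset (Elem n)) : Prop :=
  ∀ k : Fin K, (S.filter fun i => i.1 = k).card ≤ B k

/-- Monotonicity of a set function. -/
def MonotoneSet (n : Fin K → ℕ) (f : Finset (Elem n) → ℝ) : Prop :=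
  ∀ A B : Finset (Elem n), A ⊆ B → f A ≤ f B

/-- The marginal contribution `f(v|A) = f(A ∪ {v}) - f(A)`. -/
def marg (n : Fin K → ℕ) (f : Finset (Elem n) → ℝ) (v : Elem n) (A : Finset (Elem n)) : ℝ :=
  f (insert v A) - f A

/-- `α`-weak DR-submodularity: `f(v|A) ≥ α·f(v|B)` for all `A ⊆ B` and `v ∉ B`. -/
def WeaklyDR (n : Fin K → ℕ) (f : Finset (Elem n) → ℝ) (α : ℝ) : Prop :=
  ∀ A B : Finset (Elem n), A ⊆ B → ∀ v, v ∉ B → α * marg n f v B ≤ marg n f v A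

/-- `γ`-weak submodularity from below. -/
def WeaklyBelow (n : Fin K → ℕ) (f : Finset (Elem n) → ℝ) (γ : ℝ) : Prop :=
  ∀ A B : Finset (Elem n), A ⊆ B → γ * (f B - f A) ≤ ∑ v ∈ B \ A, marg n f v A

/-- `β`-weak submodularity from above. -/
def WeaklyAbove (n : Fin K → ℕ) (f : Finset (Elem n) → ℝ) (β : ℝ) : Prop :=
  ∀ A B : Finset (Elem n), A ⊆ B → ∑ v ∈ B \ A, marg n f v (B.erase v) ≤ β * (f B - f A)

/-- The scaled indicator vector `Σ_{k=1}^K (1/B_k)·1_{S∩V_k}`. -/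
def indVec (n B : Fin K → ℕ) (S : Finset (Elem n)) : Elem n → ℝ :=
  fun i => if i ∈ S then ((B i.1 : ℝ))⁻¹ else 0


/-- The (coordinatewise) auxiliary integral `∫_0^1 w(z)·∇F(z·x) dz`, where `z·x`
denotes coordinatewise scaling of `x` by `z`. -/
def auxGrad (n B : Fin K → ℕ) (f : Finset (Elem n) → ℝ) (w : ℝ → ℝ) (x : Elem n → ℝ) :
    Elem n → ℝ :=
  fun i => ∫ z in (0:ℝ)..1, w z * grad n (ME n B f) (fun j => z * x j) i

section Aux

variable {K : ℕ} {n B : Fin K → ℕ}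

lemma sum_prob (x : Elem n → ℝ) (k : Fin K) :
    ∑ o : Option (Fin (n k)), prob n x k o = 1 := by
  rw [Fintype.sum_option]
  simp [prob]

lemma chosen_congr {e e' : Choice n B} {A : Finset (Slot B)} (h : ∀ s ∈ A, e s = e' s) :
    chosen n B e A = chosen n B e' A :=
  Finset.biUnion_congr rfl fun s hs => by rw [h s hs]

lemma chosen_subset (e : Choice n B) {A A' : Finset (Slot B)} (h : A ⊆ A') :
    chosen n B e A ⊆ chosen n B e A' :=
  Finset.biUnion_subset_biUnion_of_subset_left _ h

lemma chosen_univ_eq (e : Choice n B) (s₀ : Slot B) :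
    chosen n B e Finset.univ
      = ((e s₀).map fun m => (⟨s₀.1, m⟩ : Elem n)).toFinset ∪ chosen n B e (Finset.univ.erase s₀) := by
  conv_lhs => rw [← Finset.insert_erase (Finset.mem_univ s₀)]
  exact Finset.biUnion_insert

/-- coefficients for the partial derivative in direction `i` -/
def dcoef (n B : Fin K → ℕ) (i : Elem n) (s : Slot B) : Option (Fin (n s.1)) → ℝ
  | some m => if (⟨s.1, m⟩ : Elem n) = i then 1 else 0
  | none => if s.1 = i.1 then -1 else 0

lemma hasDerivAt_prob_update (x : Elem n → ℝ) (i : Elem n) (s : Slot B)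
    (o : Option (Fin (n s.1))) :
    HasDerivAt (fun t => prob n (Function.update x i t) s.1 o) (dcoef n B i s o) (x i) := by
  cases o with
  | some m =>
    by_cases h : (⟨s.1, m⟩ : Elem n) = i
    · simp only [prob, Function.update_apply, h, if_pos, dcoef, if_true]
      exact hasDerivAt_id' (x i)
    · simp only [prob, Function.update_apply, h, if_false, dcoef]
      exact hasDerivAt_const _ _
  | none =>
    by_cases h : s.1 = i.1
    · obtain ⟨ik, im⟩ := i
      obtain ⟨sk, sb⟩ := s
      dsimp at h
      subst h
      simp only [prob, dcoef, Function.update_apply, if_pos rfl]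
      have : ∀ t : ℝ, (∑ m : Fin (n sk),
          (if (⟨sk, m⟩ : Elem n) = ⟨sk, im⟩ then t else x ⟨sk, m⟩))
          = t + ∑ m ∈ Finset.univ.erase im, x ⟨sk, m⟩ := by
        intro t
        rw [← Finset.add_sum_erase _ _ (Finset.mem_univ im), if_pos rfl]
        congr 1
        refine Finset.sum_congr rfl fun m hm => ?_
        simp only [Finset.mem_erase] at hm
        exact if_neg (show ¬((⟨sk, m⟩ : Elem n) = ⟨sk, im⟩) from
          fun hc => hm.1 (by simpa using hc))
      simp only [this]
      simpa using ((hasDerivAt_id (x ⟨sk, im⟩)).add_const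
        (∑ m ∈ Finset.univ.erase im, x ⟨sk, m⟩)).const_sub 1
    · have : ∀ t : ℝ, prob n (Function.update x i t) s.1 none = prob n x s.1 none := by
        intro t
        simp only [prob]
        congr 1
        refine Finset.sum_congr rfl fun m _ => ?_
        exact (Function.update_apply x i t _).trans
          (if_neg (show ¬((⟨s.1, m⟩ : Elem n) = i) from fun hc => h (congrArg Sigma.fst hc)))
      simp only [this, dcoef, if_neg h]
      exact hasDerivAt_const _ _

end Aux
section Deriv

variable {K : ℕ} {n B : Fin K → ℕ}

/-- explicit formula for the partial derivative of the multinoulli extension -/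
def Eform (n B : Fin K → ℕ) (f : Finset (Elem n) → ℝ) (i : Elem n) (x : Elem n → ℝ) : ℝ :=
  ∑ e : Choice n B, f (chosen n B e Finset.univ) *
    ∑ s₀ : Slot B, (∏ s ∈ Finset.univ.erase s₀, prob n x s.1 (e s)) * dcoef n B i s₀ (e s₀)

lemma hasDerivAt_jointProb_update (x : Elem n → ℝ) (i : Elem n) (e : Choice n B) :
    HasDerivAt (fun t => jointProb n B (Function.update x i t) e)
      (∑ s₀ : Slot B, (∏ s ∈ Finset.univ.erase s₀, prob n x s.1 (e s)) * dcoef n B i s₀ (e s₀))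
      (x i) := by
  have h := HasDerivAt.fun_finsetProd (u := (Finset.univ : Finset (Slot B)))
    (f := fun (s : Slot B) t => prob n (Function.update x i t) s.1 (e s))
    (f' := fun s => dcoef n B i s (e s)) (x := x i)
    (fun s _ => hasDerivAt_prob_update x i s (e s))
  simpa [jointProb, Function.update_eq_self, smul_eq_mul] using h

lemma pderiv_ME_eq_Eform (f : Finset (Elem n) → ℝ) (i : Elem n) (x : Elem n → ℝ) :
    pderiv n (ME n B f) i x = Eform n B f i x := by
  have h : HasDerivAt (fun t => ME n B f (Function.update x i t)) (Eform n B f i x) (x i) := by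
    unfold ME Eform
    exact HasDerivAt.fun_sum fun e _ => (hasDerivAt_jointProb_update x i e).const_mul _
  exact h.deriv

/-- coefficients for the derivative along the ray `z ↦ z·x` -/
def ccoef (n B : Fin K → ℕ) (x : Elem n → ℝ) (s : Slot B) : Option (Fin (n s.1)) → ℝ
  | some m => x ⟨s.1, m⟩
  | none => -∑ m : Fin (n s.1), x ⟨s.1, m⟩

lemma hasDerivAt_prob_scaled (x : Elem n → ℝ) (s : Slot B) (o : Option (Fin (n s.1))) (z : ℝ) :
    HasDerivAt (fun z : ℝ => prob n (fun j => z * x j) s.1 o) (ccoef n B x s o) z := by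
  cases o with
  | some m => exact hasDerivAt_mul_const _
  | none =>
    simp only [prob, ccoef, ← Finset.mul_sum]
    simpa using (hasDerivAt_mul_const (∑ m : Fin (n s.1), x ⟨s.1, m⟩)).const_sub 1

lemma hasDerivAt_ME_scaled (f : Finset (Elem n) → ℝ) (x : Elem n → ℝ) (z : ℝ) :
    HasDerivAt (fun z : ℝ => ME n B f (fun j => z * x j))
      (∑ e : Choice n B, f (chosen n B e Finset.univ) *
        ∑ s₀ : Slot B, (∏ s ∈ Finset.univ.erase s₀, prob n (fun j => z * x j) s.1 (e s)) *
          ccoef n B x s₀ (e s₀)) z := by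
  unfold ME
  refine HasDerivAt.fun_sum fun e _ => HasDerivAt.const_mul _ ?_
  have h := HasDerivAt.fun_finsetProd (u := (Finset.univ : Finset (Slot B)))
    (f := fun (s : Slot B) z => prob n (fun j => z * x j) s.1 (e s))
    (f' := fun s => ccoef n B x s (e s)) (x := z)
    (fun s _ => hasDerivAt_prob_scaled x s (e s) z)
  simpa [jointProb, smul_eq_mul] using h

lemma sum_mul_dcoef (x : Elem n → ℝ) (s₀ : Slot B) (o : Option (Fin (n s₀.1))) :
    ∑ i : Elem n, x i * dcoef n B i s₀ o = ccoef n B x s₀ o := by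
  cases o with
  | some m =>
    simp only [dcoef, ccoef, mul_ite, mul_one, mul_zero]
    simpa using Finset.sum_ite_eq Finset.univ (⟨s₀.1, m⟩ : Elem n) x
  | none =>
    simp only [dcoef, ccoef]
    rw [show (Finset.univ : Finset (Elem n)) = Finset.univ.sigma fun _ => Finset.univ from
      Finset.univ_sigma_univ.symm, Finset.sum_sigma]
    have h1 : ∀ k : Fin K, (∑ m : Fin (n k), x ⟨k, m⟩ * if s₀.1 = k then (-1:ℝ) else 0)
        = if s₀.1 = k then -∑ m : Fin (n k), x ⟨k, m⟩ else 0 := by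
      intro k; by_cases h : s₀.1 = k <;> simp [h]
    simp only [h1]
    simpa using Finset.sum_ite_eq Finset.univ s₀.1
      (fun k => -∑ m : Fin (n k), x ⟨k, m⟩)

lemma scaled_deriv_eq (f : Finset (Elem n) → ℝ) (x : Elem n → ℝ) (z : ℝ) :
    (∑ i : Elem n, x i * Eform n B f i (fun j => z * x j))
      = ∑ e : Choice n B, f (chosen n B e Finset.univ) *
        ∑ s₀ : Slot B, (∏ s ∈ Finset.univ.erase s₀, prob n (fun j => z * x j) s.1 (e s)) *
          ccoef n B x s₀ (e s₀) := by
  unfold Eform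
  simp only [Finset.mul_sum]
  rw [Finset.sum_comm]
  refine Finset.sum_congr rfl fun e _ => ?_
  rw [Finset.sum_comm]
  refine Finset.sum_congr rfl fun s₀ _ => ?_
  rw [← sum_mul_dcoef (n := n) (B := B) x s₀ (e s₀), Finset.mul_sum, Finset.mul_sum]
  exact Finset.sum_congr rfl fun i _ => by ring

end Deriv
section Slice

variable {K : ℕ} {n B : Fin K → ℕ}

lemma chosen_update_erase (e : Choice n B) (s₀ : Slot B) (o : Option (Fin (n s₀.1))) :
    chosen n B (Function.update e s₀ o) (Finset.univ.erase s₀)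
      = chosen n B e (Finset.univ.erase s₀) :=
  chosen_congr fun s hs => Function.update_of_ne (Finset.ne_of_mem_erase hs) _ _

lemma prod_update_erase (x : Elem n → ℝ) (e : Choice n B) (s₀ : Slot B)
    (o : Option (Fin (n s₀.1))) :
    (∏ s ∈ Finset.univ.erase s₀, prob n x s.1 (Function.update e s₀ o s))
      = ∏ s ∈ Finset.univ.erase s₀, prob n x s.1 (e s) :=
  Finset.prod_congr rfl fun s hs => by
    rw [Function.update_of_ne (Finset.ne_of_mem_erase hs)]

lemma sum_slice (s₀ : Slot B) (G : Option (Fin (n s₀.1)) → Choice n B → ℝ)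
    (hG : ∀ (o o' : Option (Fin (n s₀.1))) (e : Choice n B),
      G o (Function.update e s₀ o') = G o e) :
    ∑ e : Choice n B, G (e s₀) e
      = ∑ o : Option (Fin (n s₀.1)),
          ∑ e ∈ Finset.univ.filter (fun e : Choice n B => e s₀ = none), G o e := by
  rw [← Finset.sum_fiberwise Finset.univ (fun e : Choice n B => e s₀)
    (fun e => G (e s₀) e)]
  refine Finset.sum_congr rfl fun o _ => ?_
  rw [Finset.sum_congr rfl (g := fun e => G o e)
    (fun e he => by rw [(Finset.mem_filter.mp he).2])]
  refine Finset.sum_nbij' (fun e => Function.update e s₀ none)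
    (fun e => Function.update e s₀ o) ?_ ?_ ?_ ?_ ?_
  · intro e he
    simp [Function.update_self]
  · intro e he
    simp [Finset.mem_filter]
  · intro e he
    simp only [Finset.mem_filter, Finset.mem_univ, true_and] at he
    show Function.update (Function.update e s₀ none) s₀ o = e
    rw [Function.update_idem, ← he, Function.update_eq_self]
  · intro e he
    simp only [Finset.mem_filter, Finset.mem_univ, true_and] at he
    show Function.update (Function.update e s₀ o) s₀ none = e
    rw [Function.update_idem, ← he, Function.update_eq_self]
  · intro e he
    exact (hG o none e).symm

end Slice
section Dform

variable {K : ℕ} {n B : Fin K → ℕ}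

lemma sum_slot {M : Type*} [AddCommMonoid M] (g : Slot B → M) :
    ∑ s₀ : Slot B, g s₀ = ∑ k : Fin K, ∑ b : Fin (B k), g ⟨k, b⟩ := by
  rw [← Finset.univ_sigma_univ, Finset.sum_sigma]

lemma sum_elem {M : Type*} [AddCommMonoid M] (g : Elem n → M) :
    ∑ i : Elem n, g i = ∑ k : Fin K, ∑ m : Fin (n k), g ⟨k, m⟩ := by
  rw [← Finset.univ_sigma_univ, Finset.sum_sigma]

/-- the grouped formula for the partial derivative -/
def Dform (n B : Fin K → ℕ) (f : Finset (Elem n) → ℝ) (i : Elem n) (x : Elem n → ℝ) : ℝ :=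
  ∑ b : Fin (B i.1), ∑ e : Choice n B,
    marg n f i (chosen n B e (Finset.univ.erase ⟨i.1, b⟩)) * jointProb n B x e

lemma dcoef_eq_zero {i : Elem n} {s₀ : Slot B} (h : s₀.1 ≠ i.1) (o : Option (Fin (n s₀.1))) :
    dcoef n B i s₀ o = 0 := by
  cases o with
  | some m =>
    exact if_neg (show ¬((⟨s₀.1, m⟩ : Elem n) = i) from fun hc => h (congrArg Sigma.fst hc))
  | none => exact if_neg h

lemma slot_term_eq (f : Finset (Elem n) → ℝ) (x : Elem n → ℝ) (i : Elem n) (b : Fin (B i.1)) :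
    (∑ e : Choice n B, f (chosen n B e Finset.univ) *
      ((∏ s ∈ Finset.univ.erase ⟨i.1, b⟩, prob n x s.1 (e s)) *
        dcoef n B i ⟨i.1, b⟩ (e ⟨i.1, b⟩)))
      = ∑ e : Choice n B,
          marg n f i (chosen n B e (Finset.univ.erase ⟨i.1, b⟩)) * jointProb n B x e := by
  obtain ⟨ik, im⟩ := i
  set s₀ : Slot B := ⟨ik, b⟩ with hs₀
  have hind1 : ∀ (o o' : Option (Fin (n s₀.1))) (e : Choice n B),
      (f ((o.map fun m => (⟨s₀.1, m⟩ : Elem n)).toFinset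
            ∪ chosen n B (Function.update e s₀ o') (Finset.univ.erase s₀)) *
        ((∏ s ∈ Finset.univ.erase s₀, prob n x s.1 (Function.update e s₀ o' s))
          * dcoef n B ⟨ik, im⟩ s₀ o))
      = f ((o.map fun m => (⟨s₀.1, m⟩ : Elem n)).toFinset
            ∪ chosen n B e (Finset.univ.erase s₀)) *
        ((∏ s ∈ Finset.univ.erase s₀, prob n x s.1 (e s)) * dcoef n B ⟨ik, im⟩ s₀ o) := by
    intro o o' e
    rw [prod_update_erase, chosen_update_erase]
  have hind2 : ∀ (o o' : Option (Fin (n s₀.1))) (e : Choice n B),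
      (marg n f ⟨ik, im⟩ (chosen n B (Function.update e s₀ o') (Finset.univ.erase s₀)) *
        (prob n x s₀.1 o
          * ∏ s ∈ Finset.univ.erase s₀, prob n x s.1 (Function.update e s₀ o' s)))
      = marg n f ⟨ik, im⟩ (chosen n B e (Finset.univ.erase s₀)) *
        (prob n x s₀.1 o * ∏ s ∈ Finset.univ.erase s₀, prob n x s.1 (e s)) := by
    intro o o' e
    rw [prod_update_erase, chosen_update_erase]
  have e1 := sum_slice (n := n) (B := B) s₀
    (fun o e => f ((o.map fun m => (⟨s₀.1, m⟩ : Elem n)).toFinset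
        ∪ chosen n B e (Finset.univ.erase s₀)) *
      ((∏ s ∈ Finset.univ.erase s₀, prob n x s.1 (e s)) * dcoef n B ⟨ik, im⟩ s₀ o)) hind1
  have e2 := sum_slice (n := n) (B := B) s₀
    (fun o e => marg n f ⟨ik, im⟩ (chosen n B e (Finset.univ.erase s₀)) *
      (prob n x s₀.1 o * ∏ s ∈ Finset.univ.erase s₀, prob n x s.1 (e s))) hind2
  have h1 : (∑ e : Choice n B, f (chosen n B e Finset.univ) *
      ((∏ s ∈ Finset.univ.erase s₀, prob n x s.1 (e s)) * dcoef n B ⟨ik, im⟩ s₀ (e s₀)))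
      = ∑ e : Choice n B, (fun (o : Option (Fin (n s₀.1))) (e : Choice n B) =>
          f ((o.map fun m => (⟨s₀.1, m⟩ : Elem n)).toFinset
              ∪ chosen n B e (Finset.univ.erase s₀)) *
            ((∏ s ∈ Finset.univ.erase s₀, prob n x s.1 (e s)) * dcoef n B ⟨ik, im⟩ s₀ o))
          (e s₀) e :=
    Finset.sum_congr rfl fun e _ => by simp only [chosen_univ_eq e s₀]
  have h2 : (∑ e : Choice n B,
        marg n f ⟨ik, im⟩ (chosen n B e (Finset.univ.erase s₀)) * jointProb n B x e)
      = ∑ e : Choice n B, (fun (o : Option (Fin (n s₀.1))) (e : Choice n B) =>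
          marg n f ⟨ik, im⟩ (chosen n B e (Finset.univ.erase s₀)) *
            (prob n x s₀.1 o * ∏ s ∈ Finset.univ.erase s₀, prob n x s.1 (e s)))
          (e s₀) e :=
    Finset.sum_congr rfl fun e _ => by
      simp only []
      rw [show jointProb n B x e = prob n x s₀.1 (e s₀)
          * ∏ s ∈ Finset.univ.erase s₀, prob n x s.1 (e s) from
        (Finset.mul_prod_erase Finset.univ _ (Finset.mem_univ s₀)).symm]
  rw [h1, e1, h2, e2]
  rw [Finset.sum_comm, Finset.sum_comm
      (s := (Finset.univ : Finset (Option (Fin (n s₀.1)))))]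
  refine Finset.sum_congr rfl fun e _ => ?_
  rw [Fintype.sum_option, Fintype.sum_option]
  simp only [Option.map_none, Option.toFinset_none, Finset.empty_union,
    Option.map_some, Option.toFinset_some, ← Finset.insert_eq]
  rw [Finset.sum_eq_single im (fun m _ hm => by
      rw [show dcoef n B ⟨ik, im⟩ s₀ (some m) = 0 from
        if_neg fun hc => hm (by simp at hc; exact hc.2)]
      ring) (fun hm => absurd (Finset.mem_univ im) hm)]
  rw [show dcoef n B ⟨ik, im⟩ s₀ (some im) = 1 from if_pos rfl,
    show dcoef n B ⟨ik, im⟩ s₀ none = (-1 : ℝ) from if_pos rfl]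
  have hps : prob n x s₀.1 none + ∑ m : Fin (n s₀.1), prob n x s₀.1 (some m) = 1 := by
    rw [← Fintype.sum_option (f := prob n x s₀.1)]
    exact sum_prob x s₀.1
  have hps : prob n x ik none + ∑ m : Fin (n ik), prob n x ik (some m) = 1 := by
    rw [← Fintype.sum_option (f := prob n x ik)]
    exact sum_prob x ik
  have hre : (∑ m : Fin (n ik), marg n f ⟨ik, im⟩ (chosen n B e (Finset.univ.erase s₀)) *
        (prob n x ik (some m) * ∏ s ∈ Finset.univ.erase s₀, prob n x s.1 (e s)))
      = marg n f ⟨ik, im⟩ (chosen n B e (Finset.univ.erase s₀)) *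
        (∏ s ∈ Finset.univ.erase s₀, prob n x s.1 (e s)) *
        ∑ m : Fin (n ik), prob n x ik (some m) := by
    rw [Finset.mul_sum]
    exact Finset.sum_congr rfl fun m _ => by ring
  rw [hre]
  simp only [marg]
  linear_combination ((f (chosen n B e (Finset.univ.erase s₀))
      - f (insert (⟨ik, im⟩ : Elem n) (chosen n B e (Finset.univ.erase s₀)))) *
    (∏ s ∈ Finset.univ.erase s₀, prob n x s.1 (e s))) * hps


lemma Eform_eq_Dform (f : Finset (Elem n) → ℝ) (i : Elem n) (x : Elem n → ℝ) :
    Eform n B f i x = Dform n B f i x := by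
  unfold Eform Dform
  simp only [Finset.mul_sum]
  rw [Finset.sum_comm]
  rw [sum_slot (fun s₀ => ∑ e : Choice n B, f (chosen n B e Finset.univ) *
    ((∏ s ∈ Finset.univ.erase s₀, prob n x s.1 (e s)) * dcoef n B i s₀ (e s₀)))]
  rw [Finset.sum_eq_single_of_mem i.1 (Finset.mem_univ _) (fun k _ hk => by
    refine Finset.sum_eq_zero fun b _ => Finset.sum_eq_zero fun e _ => ?_
    rw [dcoef_eq_zero (s₀ := ⟨k, b⟩) hk]
    ring)]
  exact Finset.sum_congr rfl fun b _ => slot_term_eq f x i b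

end Dform
section Comb

variable {K : ℕ} {n B : Fin K → ℕ}

variable {f : Finset (Elem n) → ℝ}

lemma marg_nonneg (hmono : MonotoneSet n f) (i : Elem n) (A : Finset (Elem n)) :
    0 ≤ marg n f i A :=
  sub_nonneg.mpr (hmono _ _ (Finset.subset_insert _ _))

lemma Rm_subset_R (e : Choice n B) (s : Slot B) :
    chosen n B e (Finset.univ.erase s) ⊆ chosen n B e Finset.univ :=
  chosen_subset e (Finset.erase_subset _ _)

lemma N_nonneg (hmono : MonotoneSet n f) (e : Choice n B) (s : Slot B) :
    0 ≤ f (chosen n B e Finset.univ) - f (chosen n B e (Finset.univ.erase s)) :=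
  sub_nonneg.mpr (hmono _ _ (Rm_subset_R e s))

lemma sdiff_Rm_small (e : Choice n B) (s : Slot B) :
    (chosen n B e Finset.univ \ chosen n B e (Finset.univ.erase s)).card ≤ 1 := by
  have h : chosen n B e Finset.univ \ chosen n B e (Finset.univ.erase s)
      ⊆ ((e s).map fun m => (⟨s.1, m⟩ : Elem n)).toFinset := by
    intro u hu
    rw [Finset.mem_sdiff, chosen_univ_eq e s, Finset.mem_union] at hu
    exact hu.1.resolve_right fun hc => hu.2 hc
  refine (Finset.card_le_card h).trans ?_
  cases e s <;> simp

/-- L4 : the key marginal lower bound at a reduced set -/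
lemma marg_Rm_lower (hmono : MonotoneSet n f) {γ : ℝ} (hγ0 : 0 < γ) (hγ1 : γ ≤ 1)
    (hbelow : WeaklyBelow n f γ) (e : Choice n B) (s : Slot B) (i : Elem n) :
    γ * marg n f i (chosen n B e Finset.univ)
      - (1 - γ) * (f (chosen n B e Finset.univ) - f (chosen n B e (Finset.univ.erase s)))
      ≤ marg n f i (chosen n B e (Finset.univ.erase s)) := by
  set A := chosen n B e (Finset.univ.erase s) with hA
  set R := chosen n B e Finset.univ with hR
  have hAR : A ⊆ R := Rm_subset_R e s
  have hsub : A ⊆ insert i R := hAR.trans (Finset.subset_insert _ _)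
  have hb := hbelow A (insert i R) hsub
  -- bound the sum of marginals
  have hsdiff : insert i R \ A ⊆ insert i (R \ A) := by
    intro u hu
    rw [Finset.mem_sdiff, Finset.mem_insert] at hu
    rcases hu.1 with h | h
    · rw [h]; exact Finset.mem_insert_self _ _
    · exact Finset.mem_insert_of_mem (Finset.mem_sdiff.mpr ⟨h, hu.2⟩)
  have hsum1 : (∑ v ∈ insert i R \ A, marg n f v A)
      ≤ ∑ v ∈ insert i (R \ A), marg n f v A :=
    Finset.sum_le_sum_of_subset_of_nonneg hsdiff fun v _ _ => marg_nonneg hmono v A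
  have hRA : (∑ v ∈ R \ A, marg n f v A) ≤ f R - f A := by
    rcases Finset.eq_empty_or_nonempty (R \ A) with h | ⟨v, hv⟩
    · rw [h, Finset.sum_empty]
      exact N_nonneg hmono e s
    · have hcard : (R \ A).card ≤ 1 := sdiff_Rm_small e s
      have hsingle : R \ A = {v} := by
        refine Finset.eq_singleton_iff_unique_mem.mpr ⟨hv, fun u hu => ?_⟩
        exact Finset.card_le_one.mp hcard u hu v hv
      rw [hsingle, Finset.sum_singleton]
      have hvR : v ∈ R := (Finset.mem_sdiff.mp hv).1
      have : insert v A ⊆ R := Finset.insert_subset hvR hAR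
      exact sub_le_sub_right (hmono _ _ this) _
  have hsum2 : (∑ v ∈ insert i (R \ A), marg n f v A) ≤ marg n f i A + (f R - f A) := by
    by_cases hi : i ∈ R \ A
    · rw [Finset.insert_eq_self.mpr hi]
      have := marg_nonneg hmono i A
      linarith [hRA]
    · rw [Finset.sum_insert hi]
      linarith [hRA]
  have hins : γ * (f (insert i R) - f A) ≤ marg n f i A + (f R - f A) :=
    le_trans hb (le_trans hsum1 hsum2)
  simp only [marg] at hins ⊢
  nlinarith [hins]
end Comb
section Comb2

variable {K : ℕ} {n B : Fin K → ℕ} {f : Finset (Elem n) → ℝ}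

/-- the element chosen by slot `s` (junk value if `none`) -/
def wfun (n B : Fin K → ℕ) (hn : ∀ k, 1 ≤ n k) (e : Choice n B) (s : Slot B) : Elem n :=
  (e s).elim ⟨s.1, ⟨0, hn s.1⟩⟩ fun m => ⟨s.1, m⟩

/-- L5 : total slot-removal losses are bounded by `β f(R)` -/
lemma sum_N_le (hn : ∀ k, 1 ≤ n k) (hmono : MonotoneSet n f) {β : ℝ} (hβ : 1 ≤ β)
    (habove : WeaklyAbove n f β) (hfempty : f ∅ = 0) (e : Choice n B) :
    (∑ s : Slot B, (f (chosen n B e Finset.univ) - f (chosen n B e (Finset.univ.erase s))))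
      ≤ β * f (chosen n B e Finset.univ) := by
  classical
  set R := chosen n B e Finset.univ with hR
  set w := wfun n B hn e with hw
  set good : Finset (Slot B) :=
    Finset.univ.filter (fun s => (e s).isSome ∧ w s ∉ chosen n B e (Finset.univ.erase s))
    with hgood
  have hsplit : ∀ s : Slot B, s ∈ good →
      R = insert (w s) (chosen n B e (Finset.univ.erase s)) ∧
        w s ∉ chosen n B e (Finset.univ.erase s) := by
    intro s hs
    rw [hgood, Finset.mem_filter] at hs
    obtain ⟨-, hsome, hnot⟩ := hs
    obtain ⟨m, hm⟩ := Option.isSome_iff_exists.mp hsome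
    have : w s = ⟨s.1, m⟩ := by simp [hw, wfun, hm]
    refine ⟨?_, hnot⟩
    rw [hR, chosen_univ_eq e s, hm, this]
    rw [Option.map_some, Option.toFinset_some, Finset.insert_eq]
  -- off good, the loss is zero
  have hzero : ∀ s ∈ (Finset.univ : Finset (Slot B)), s ∉ good →
      f R - f (chosen n B e (Finset.univ.erase s)) = 0 := by
    intro s _ hs
    rw [hgood, Finset.mem_filter] at hs
    push_neg at hs
    have hs' := hs (Finset.mem_univ s)
    cases hm : e s with
    | some m =>
      have hmem := hs' (by rw [hm]; rfl)
      have hwm : w s = ⟨s.1, m⟩ := by simp [hw, wfun, hm]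
      have : R = chosen n B e (Finset.univ.erase s) := by
        rw [hR, chosen_univ_eq e s, hm]
        rw [hwm] at hmem
        simp only [Option.map_some, Option.toFinset_some]
        exact Finset.union_eq_right.mpr (Finset.singleton_subset_iff.mpr hmem)
      rw [this, sub_self]
    | none =>
      have : R = chosen n B e (Finset.univ.erase s) := by
        rw [hR, chosen_univ_eq e s, hm]
        simp
      rw [this, sub_self]
  rw [← Finset.sum_subset (Finset.subset_univ good) hzero]
  -- on good, the loss is a marginal at an erased set
  have hval : ∀ s ∈ good, f R - f (chosen n B e (Finset.univ.erase s))
      = marg n f (w s) (R.erase (w s)) := by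
    intro s hs
    obtain ⟨h1, h2⟩ := hsplit s hs
    rw [marg]
    have herase : R.erase (w s) = chosen n B e (Finset.univ.erase s) := by
      rw [h1, Finset.erase_insert h2]
    rw [herase, ← h1]
  rw [Finset.sum_congr rfl hval]
  -- injectivity on good
  have hinj : ∀ s ∈ good, ∀ s' ∈ good, w s = w s' → s = s' := by
    intro s hs s' hs' hws
    by_contra hne
    rw [hgood, Finset.mem_filter] at hs hs'
    obtain ⟨-, hsome, -⟩ := hs
    obtain ⟨-, -, hnot'⟩ := hs'
    obtain ⟨m, hm⟩ := Option.isSome_iff_exists.mp hsome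
    apply hnot'
    rw [← hws]
    have hwm : w s = ⟨s.1, m⟩ := by simp [hw, wfun, hm]
    refine Finset.mem_biUnion.mpr ⟨s, Finset.mem_erase.mpr ⟨hne, Finset.mem_univ s⟩, ?_⟩
    rw [hm, hwm]
    simp
  rw [← Finset.sum_image (f := fun v => marg n f v (R.erase v)) hinj]
  have himage : good.image w ⊆ R := by
    intro v hv
    obtain ⟨s, hs, hws⟩ := Finset.mem_image.mp hv
    obtain ⟨h1, -⟩ := hsplit s hs
    rw [← hws, h1]
    exact Finset.mem_insert_self _ _
  have hmono_sum : (∑ v ∈ good.image w, marg n f v (R.erase v))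
      ≤ ∑ v ∈ R, marg n f v (R.erase v) :=
    Finset.sum_le_sum_of_subset_of_nonneg himage fun v _ _ => marg_nonneg hmono v _
  refine hmono_sum.trans ?_
  have hab := habove ∅ R (Finset.empty_subset R)
  rw [Finset.sdiff_empty, hfempty, sub_zero] at hab
  exact hab

/-- L6 : lower bound for the sum of marginals over `S` at `R` -/
lemma sum_marg_S (hmono : MonotoneSet n f) {γ : ℝ} (hγ0 : 0 < γ)
    (hbelow : WeaklyBelow n f γ) (S R : Finset (Elem n)) :
    γ * (f S - f R) ≤ ∑ i ∈ S, marg n f i R := by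
  have hb := hbelow R (S ∪ R) Finset.subset_union_right
  have hsd : (S ∪ R) \ R = S \ R := Finset.union_sdiff_right S R
  rw [hsd] at hb
  have h1 : (∑ v ∈ S \ R, marg n f v R) ≤ ∑ i ∈ S, marg n f i R :=
    Finset.sum_le_sum_of_subset_of_nonneg Finset.sdiff_subset
      fun v _ _ => marg_nonneg hmono v R
  have h2 : f S ≤ f (S ∪ R) := hmono _ _ Finset.subset_union_left
  nlinarith [hγ0.le]

end Comb2
section Comb3

variable {K : ℕ} {n B : Fin K → ℕ} {f : Finset (Elem n) → ℝ}

/-- L7 : feasibility bound -/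
lemma feas_bound (hmono : MonotoneSet n f) (hB : ∀ k, 0 < B k)
    {S : Finset (Elem n)} (hS : Feasible n B S) (e : Choice n B) :
    (∑ i ∈ S, (B i.1 : ℝ)⁻¹ * ∑ b : Fin (B i.1),
        (f (chosen n B e Finset.univ) - f (chosen n B e (Finset.univ.erase ⟨i.1, b⟩))))
      ≤ ∑ s : Slot B,
          (f (chosen n B e Finset.univ) - f (chosen n B e (Finset.univ.erase s))) := by
  classical
  set N : Slot B → ℝ :=
    fun s => f (chosen n B e Finset.univ) - f (chosen n B e (Finset.univ.erase s)) with hN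
  have hsplitS :
      (∑ i ∈ S, (B i.1 : ℝ)⁻¹ * ∑ b : Fin (B i.1), N ⟨i.1, b⟩)
        = ∑ k : Fin K, ∑ i ∈ S.filter (fun i => i.1 = k),
            (B i.1 : ℝ)⁻¹ * ∑ b : Fin (B i.1), N ⟨i.1, b⟩ :=
    (Finset.sum_fiberwise_of_maps_to (fun i _ => Finset.mem_univ i.1) _).symm
  rw [hsplitS, sum_slot N]
  refine Finset.sum_le_sum fun k _ => ?_
  have hterm : ∀ i ∈ S.filter (fun i => i.1 = k),
      (B i.1 : ℝ)⁻¹ * (∑ b : Fin (B i.1), N ⟨i.1, b⟩)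
        = (B k : ℝ)⁻¹ * ∑ b : Fin (B k), N ⟨k, b⟩ := by
    intro i hi
    have h : i.1 = k := (Finset.mem_filter.mp hi).2
    subst h
    rfl
  rw [Finset.sum_congr rfl hterm, Finset.sum_const, nsmul_eq_mul]
  have hNpos : (0:ℝ) ≤ ∑ b : Fin (B k), N ⟨k, b⟩ :=
    Finset.sum_nonneg fun b _ => N_nonneg hmono e ⟨k, b⟩
  have hcard : ((S.filter (fun i => i.1 = k)).card : ℝ) ≤ (B k : ℝ) :=
    Nat.cast_le.mpr (hS k)
  have hBpos : (0:ℝ) < (B k : ℝ) := Nat.cast_pos.mpr (hB k)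
  calc ((S.filter (fun i => i.1 = k)).card : ℝ) * ((B k : ℝ)⁻¹ * ∑ b : Fin (B k), N ⟨k, b⟩)
      ≤ (B k : ℝ) * ((B k : ℝ)⁻¹ * ∑ b : Fin (B k), N ⟨k, b⟩) := by
        apply mul_le_mul_of_nonneg_right hcard
        positivity
    _ = ∑ b : Fin (B k), N ⟨k, b⟩ := by
        rw [← mul_assoc, mul_inv_cancel₀ (ne_of_gt hBpos), one_mul]

/-- L8 : the per-outcome combinatorial inequality -/
lemma per_choice_bound (hn : ∀ k, 1 ≤ n k) (hB : ∀ k, 0 < B k)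
    (hmono : MonotoneSet n f)
    {γ β : ℝ} (hγ0 : 0 < γ) (hγ1 : γ ≤ 1) (hβ : 1 ≤ β)
    (hbelow : WeaklyBelow n f γ) (habove : WeaklyAbove n f β) (hfempty : f ∅ = 0)
    {S : Finset (Elem n)} (hS : Feasible n B S) (e : Choice n B) :
    γ ^ 2 * f S - (β * (1 - γ) + γ ^ 2) * f (chosen n B e Finset.univ)
      ≤ ∑ i ∈ S, (B i.1 : ℝ)⁻¹ * ∑ b : Fin (B i.1),
          marg n f i (chosen n B e (Finset.univ.erase ⟨i.1, b⟩)) := by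
  classical
  set R := chosen n B e Finset.univ with hR
  set N : Slot B → ℝ := fun s => f R - f (chosen n B e (Finset.univ.erase s)) with hN
  have key : ∀ i ∈ S, γ * marg n f i R - (1 - γ) * ((B i.1 : ℝ)⁻¹ * ∑ b : Fin (B i.1), N ⟨i.1, b⟩)
      ≤ (B i.1 : ℝ)⁻¹ * ∑ b : Fin (B i.1),
          marg n f i (chosen n B e (Finset.univ.erase ⟨i.1, b⟩)) := by
    intro i _
    have hBpos : (0:ℝ) < (B i.1 : ℝ) := Nat.cast_pos.mpr (hB i.1)
    have hsum : (∑ b : Fin (B i.1), (γ * marg n f i R - (1 - γ) * N ⟨i.1, b⟩))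
        ≤ ∑ b : Fin (B i.1), marg n f i (chosen n B e (Finset.univ.erase ⟨i.1, b⟩)) :=
      Finset.sum_le_sum fun b _ => marg_Rm_lower hmono hγ0 hγ1 hbelow e ⟨i.1, b⟩ i
    rw [Finset.sum_sub_distrib, Finset.sum_const, ← Finset.mul_sum] at hsum
    simp only [Finset.card_univ, Fintype.card_fin, nsmul_eq_mul] at hsum
    have := mul_le_mul_of_nonneg_left hsum (le_of_lt (inv_pos.mpr hBpos))
    rw [mul_sub, ← mul_assoc, inv_mul_cancel₀ (ne_of_gt hBpos), one_mul, ← mul_assoc,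
      mul_comm ((B i.1 : ℝ)⁻¹) (1 - γ), mul_assoc] at this
    exact this
  have h1 : (∑ i ∈ S, (γ * marg n f i R
        - (1 - γ) * ((B i.1 : ℝ)⁻¹ * ∑ b : Fin (B i.1), N ⟨i.1, b⟩)))
      ≤ ∑ i ∈ S, (B i.1 : ℝ)⁻¹ * ∑ b : Fin (B i.1),
          marg n f i (chosen n B e (Finset.univ.erase ⟨i.1, b⟩)) :=
    Finset.sum_le_sum key
  rw [Finset.sum_sub_distrib, ← Finset.mul_sum, ← Finset.mul_sum] at h1
  have h6 : γ * (f S - f R) ≤ ∑ i ∈ S, marg n f i R := sum_marg_S hmono hγ0 hbelow S R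
  have h7 : (∑ i ∈ S, (B i.1 : ℝ)⁻¹ * ∑ b : Fin (B i.1), N ⟨i.1, b⟩) ≤ ∑ s : Slot B, N s :=
    feas_bound hmono hB hS e
  have h5 : (∑ s : Slot B, N s) ≤ β * f R := sum_N_le hn hmono hβ habove hfempty e
  nlinarith [hγ0.le, sub_nonneg.mpr hγ1, h1, h6, h7, h5,
    mul_le_mul_of_nonneg_left h6 hγ0.le,
    mul_le_mul_of_nonneg_left (h7.trans h5) (sub_nonneg.mpr hγ1)]

end Comb3
section Pointwise

variable {K : ℕ} {n B : Fin K → ℕ} {f : Finset (Elem n) → ℝ}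

lemma sum_jointProb (y : Elem n → ℝ) :
    ∑ e : Choice n B, jointProb n B y e = 1 := by
  unfold jointProb
  have h := Finset.prod_univ_sum
    (t := fun s : Slot B => (Finset.univ : Finset (Option (Fin (n s.1)))))
    (f := fun s o => prob n y s.1 o)
  rw [Fintype.piFinset_univ] at h
  rw [← h]
  rw [Finset.prod_congr rfl fun s _ => sum_prob (n := n) y s.1]
  exact Finset.prod_const_one

lemma jointProb_nonneg {x : Elem n → ℝ} (hx : InSimplex n x) {z : ℝ}
    (h0 : 0 ≤ z) (h1 : z ≤ 1) (e : Choice n B) :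
    0 ≤ jointProb n B (fun j => z * x j) e := by
  refine Finset.prod_nonneg fun s _ => ?_
  cases hm : e s with
  | some m => exact mul_nonneg h0 (hx.1 _)
  | none =>
    show (0:ℝ) ≤ 1 - ∑ m : Fin (n s.1), z * x ⟨s.1, m⟩
    rw [← Finset.mul_sum]
    have hs0 : (0:ℝ) ≤ ∑ m : Fin (n s.1), x ⟨s.1, m⟩ :=
      Finset.sum_nonneg fun m _ => hx.1 _
    have hs1 := hx.2 s.1
    nlinarith

lemma pointwise_bound (hn : ∀ k, 1 ≤ n k) (hB : ∀ k, 0 < B k)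
    (hmono : MonotoneSet n f)
    {γ β : ℝ} (hγ0 : 0 < γ) (hγ1 : γ ≤ 1) (hβ : 1 ≤ β)
    (hbelow : WeaklyBelow n f γ) (habove : WeaklyAbove n f β) (hfempty : f ∅ = 0)
    {S : Finset (Elem n)} (hS : Feasible n B S)
    {x : Elem n → ℝ} (hx : InSimplex n x) {z : ℝ} (h0 : 0 ≤ z) (h1 : z ≤ 1) :
    γ ^ 2 * f S - (β * (1 - γ) + γ ^ 2) * ME n B f (fun j => z * x j)
      ≤ ∑ i : Elem n, indVec n B S i * Eform n B f i (fun j => z * x j) := by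
  classical
  set y : Elem n → ℝ := fun j => z * x j with hy
  have hrw : (∑ i : Elem n, indVec n B S i * Eform n B f i y)
      = ∑ e : Choice n B, jointProb n B y e *
          (∑ i ∈ S, (B i.1 : ℝ)⁻¹ * ∑ b : Fin (B i.1),
            marg n f i (chosen n B e (Finset.univ.erase ⟨i.1, b⟩))) := by
    have step0 : (∑ i : Elem n, indVec n B S i * Eform n B f i y)
        = ∑ i ∈ S, (B i.1 : ℝ)⁻¹ * Dform n B f i y := by
      have hterm : ∀ i : Elem n, indVec n B S i * Eform n B f i y
          = if i ∈ S then (B i.1 : ℝ)⁻¹ * Dform n B f i y else 0 := by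
        intro i; rw [Eform_eq_Dform, indVec, ite_mul, zero_mul]
      rw [Finset.sum_congr rfl fun i _ => hterm i, Finset.sum_ite_mem, Finset.univ_inter]
    rw [step0]
    have step1 : ∀ i : Elem n, (B i.1 : ℝ)⁻¹ * Dform n B f i y
        = ∑ e : Choice n B, jointProb n B y e * ((B i.1 : ℝ)⁻¹ * ∑ b : Fin (B i.1),
            marg n f i (chosen n B e (Finset.univ.erase ⟨i.1, b⟩))) := by
      intro i
      unfold Dform
      rw [Finset.sum_comm, Finset.mul_sum]
      refine Finset.sum_congr rfl fun e _ => ?_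
      rw [← Finset.sum_mul]
      ring
    rw [Finset.sum_congr rfl fun i _ => step1 i, Finset.sum_comm]
    exact Finset.sum_congr rfl fun e _ => by rw [← Finset.mul_sum]
  rw [hrw]
  have hlow : ∀ e : Choice n B,
      jointProb n B y e * (γ ^ 2 * f S
          - (β * (1 - γ) + γ ^ 2) * f (chosen n B e Finset.univ))
        ≤ jointProb n B y e *
          (∑ i ∈ S, (B i.1 : ℝ)⁻¹ * ∑ b : Fin (B i.1),
            marg n f i (chosen n B e (Finset.univ.erase ⟨i.1, b⟩))) := fun e =>
    mul_le_mul_of_nonneg_left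
      (per_choice_bound hn hB hmono hγ0 hγ1 hβ hbelow habove hfempty hS e)
      (jointProb_nonneg hx h0 h1 e)
  refine le_trans ?_ (Finset.sum_le_sum fun e _ => hlow e)
  have expand : (∑ e : Choice n B, jointProb n B y e * (γ ^ 2 * f S
      - (β * (1 - γ) + γ ^ 2) * f (chosen n B e Finset.univ)))
      = γ ^ 2 * f S * (∑ e : Choice n B, jointProb n B y e)
        - (β * (1 - γ) + γ ^ 2) * ME n B f y := by
    unfold ME
    rw [Finset.mul_sum, Finset.mul_sum, ← Finset.sum_sub_distrib]
    exact Finset.sum_congr rfl fun e _ => by ring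
  rw [expand, sum_jointProb y, mul_one]

end Pointwise
section Cont

variable {K : ℕ} {n B : Fin K → ℕ} {f : Finset (Elem n) → ℝ}

lemma continuous_prob_scaled (x : Elem n → ℝ) (k : Fin K) (o : Option (Fin (n k))) :
    Continuous fun z : ℝ => prob n (fun j => z * x j) k o := by
  cases o with
  | some m =>
    show Continuous fun z : ℝ => z * x ⟨k, m⟩
    exact continuous_id.mul continuous_const
  | none =>
    show Continuous fun z : ℝ => 1 - ∑ m : Fin (n k), z * x ⟨k, m⟩
    exact continuous_const.sub
      (continuous_finset_sum _ fun m _ => continuous_id.mul continuous_const)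

lemma continuous_jointProb_scaled (x : Elem n → ℝ) (e : Choice n B) :
    Continuous fun z : ℝ => jointProb n B (fun j => z * x j) e :=
  continuous_finset_prod _ fun s _ => continuous_prob_scaled x s.1 (e s)

lemma continuous_ME_scaled (x : Elem n → ℝ) :
    Continuous fun z : ℝ => ME n B f (fun j => z * x j) :=
  continuous_finset_sum _ fun e _ =>
    continuous_const.mul (continuous_jointProb_scaled x e)

lemma continuous_Eform_scaled (x : Elem n → ℝ) (i : Elem n) :
    Continuous fun z : ℝ => Eform n B f i (fun j => z * x j) :=
  continuous_finset_sum _ fun e _ => continuous_const.mul <|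
    continuous_finset_sum _ fun s₀ _ =>
      (continuous_finset_prod _ fun s _ => continuous_prob_scaled x s.1 (e s)).mul
        continuous_const

lemma ME_zero (hfempty : f ∅ = 0) (x : Elem n → ℝ) :
    ME n B f (fun j => (0:ℝ) * x j) = 0 := by
  unfold ME
  refine Finset.sum_eq_zero fun e _ => ?_
  by_cases h : ∀ s : Slot B, e s = none
  · have hch : chosen n B e Finset.univ = ∅ := by
      refine Finset.eq_empty_of_forall_notMem fun u hu => ?_
      obtain ⟨s, -, hus⟩ := Finset.mem_biUnion.mp hu
      rw [h s] at hus
      simp at hus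
    rw [hch, hfempty, zero_mul]
  · push_neg at h
    obtain ⟨s, hs⟩ := h
    have : jointProb n B (fun j => (0:ℝ) * x j) e = 0 := by
      refine Finset.prod_eq_zero (Finset.mem_univ s) ?_
      cases hm : e s with
      | none => exact absurd hm hs
      | some m => show (0:ℝ) * x ⟨s.1, m⟩ = 0; rw [zero_mul]
    rw [this, mul_zero]

lemma ME_one (x : Elem n → ℝ) :
    ME n B f (fun j => (1:ℝ) * x j) = ME n B f x := by
  congr 1
  funext j
  rw [one_mul]

end Cont
theorem multinoulliExtension_aux_weaklySub {K : ℕ} (n B : Fin K → ℕ) (hn : ∀ k, 1 ≤ n k)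
    (hB : ∀ k, 0 < B k) (hBn : ∀ k, B k ≤ n k)
    (f : Finset (Elem n) → ℝ) (hf0 : ∀ S, 0 ≤ f S)
    (hmono : MonotoneSet n f)
    (γ β : ℝ) (hγ0 : 0 < γ) (hγ1 : γ ≤ 1) (hβ : 1 ≤ β)
    (hbelow : WeaklyBelow n f γ) (habove : WeaklyAbove n f β)
    (hfempty : f ∅ = 0)
    (x : Elem n → ℝ) (hx : InSimplex n x)
    (S : Finset (Elem n)) (hS : Feasible n B S) :
    γ ^ 2 * (1 - Real.exp (-(β * (1 - γ) + γ ^ 2))) / (β * (1 - γ) + γ ^ 2) * f S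
        - ME n B f x ≤
      inner' n (fun i => indVec n B S i - x i)
        (auxGrad n B f (fun z => Real.exp ((β * (1 - γ) + γ ^ 2) * (z - 1))) x) := by
  classical
  set φ : ℝ := β * (1 - γ) + γ ^ 2 with hφdef
  have hφ : 0 < φ := by nlinarith
  set h : ℝ → ℝ := fun z => Real.exp (φ * (z - 1)) with hhdef
  set g : ℝ → ℝ := fun z => ME n B f (fun j => z * x j) with hgdef
  set G : Elem n → ℝ → ℝ := fun i z => Eform n B f i (fun j => z * x j) with hGdef
  set P : ℝ → ℝ := fun z => ∑ i : Elem n, indVec n B S i * G i z with hPdef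
  set Q : ℝ → ℝ := fun z => ∑ i : Elem n, x i * G i z with hQdef
  have hconth : Continuous h := by
    rw [hhdef]
    exact Real.continuous_exp.comp (continuous_const.mul (continuous_id.sub continuous_const))
  have hcontg : Continuous g := continuous_ME_scaled x
  have hcontG : ∀ i, Continuous (G i) := fun i => continuous_Eform_scaled x i
  have hcontP : Continuous P := by
    rw [hPdef]; exact continuous_finset_sum _ fun i _ => continuous_const.mul (hcontG i)
  have hcontQ : Continuous Q := by
    rw [hQdef]; exact continuous_finset_sum _ fun i _ => continuous_const.mul (hcontG i)
  have hhpos : ∀ z : ℝ, 0 ≤ h z := fun z => Real.exp_nonneg _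
  -- derivative facts
  have hgderiv : ∀ z : ℝ, HasDerivAt g (Q z) z := by
    intro z
    have h1 := hasDerivAt_ME_scaled (n := n) (B := B) f x z
    rw [← scaled_deriv_eq] at h1
    exact h1
  have hhderiv : ∀ z : ℝ, HasDerivAt h (φ * h z) z := by
    intro z
    have h1 : HasDerivAt (fun z : ℝ => φ * (z - 1)) φ z := by
      simpa using ((hasDerivAt_id z).sub_const 1).const_mul φ
    simpa [hhdef, mul_comm] using h1.exp
  have hHderiv : ∀ z : ℝ, HasDerivAt (fun z => h z * g z) (φ * h z * g z + h z * Q z) z := by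
    intro z
    have h1 : HasDerivAt (fun z => h z * g z) _ z := (hhderiv z).mul (hgderiv z)
    simpa [mul_assoc] using h1
  -- FTC
  have hint1 : IntervalIntegrable (fun z => φ * h z * g z + h z * Q z)
      MeasureTheory.volume 0 1 :=
    (((continuous_const.mul hconth).mul hcontg).add (hconth.mul hcontQ)).intervalIntegrable 0 1
  have hFTC : (∫ z in (0:ℝ)..1, (φ * h z * g z + h z * Q z)) = ME n B f x := by
    rw [intervalIntegral.integral_eq_sub_of_hasDerivAt (fun z _ => hHderiv z) hint1]
    have hg1 : g 1 = ME n B f x := ME_one x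
    have hg0 : g 0 = 0 := ME_zero hfempty x
    have hh1 : h 1 = 1 := by rw [hhdef]; simp
    rw [hg1, hg0, hh1, mul_zero, sub_zero, one_mul]
  -- value of ∫ h
  have hexp : (∫ z in (0:ℝ)..1, h z) = (1 - Real.exp (-φ)) / φ := by
    have hD : ∀ z ∈ Set.uIcc (0:ℝ) 1, HasDerivAt (fun z => h z / φ) (h z) z := by
      intro z _
      have h1 := (hhderiv z).div_const φ
      rwa [mul_comm, mul_div_assoc, div_self hφ.ne', mul_one] at h1
    rw [intervalIntegral.integral_eq_sub_of_hasDerivAt hD (hconth.intervalIntegrable 0 1)]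
    rw [hhdef]
    simp only []
    rw [show ((1:ℝ) - 1) = 0 by ring, show ((0:ℝ) - 1) = -1 by ring]
    rw [mul_zero, Real.exp_zero, mul_neg_one]
    ring
  -- integral splits
  have hI1 : IntervalIntegrable (fun z => φ * h z * g z) MeasureTheory.volume 0 1 :=
    ((continuous_const.mul hconth).mul hcontg).intervalIntegrable 0 1
  have hI2 : IntervalIntegrable (fun z => h z * Q z) MeasureTheory.volume 0 1 :=
    (hconth.mul hcontQ).intervalIntegrable 0 1
  have hI3 : IntervalIntegrable (fun z => h z * P z) MeasureTheory.volume 0 1 :=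
    (hconth.mul hcontP).intervalIntegrable 0 1
  have hIL : IntervalIntegrable (fun z => h z * (γ ^ 2 * f S - φ * g z))
      MeasureTheory.volume 0 1 :=
    (hconth.mul (continuous_const.sub (continuous_const.mul hcontg))).intervalIntegrable 0 1
  have hadd : (∫ z in (0:ℝ)..1, (φ * h z * g z)) + (∫ z in (0:ℝ)..1, h z * Q z)
      = ME n B f x := by
    rw [← intervalIntegral.integral_add hI1 hI2]
    exact hFTC
  -- pointwise inequality
  have hpt : ∀ z ∈ Set.Icc (0:ℝ) 1, h z * (γ ^ 2 * f S - φ * g z) ≤ h z * P z := by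
    intro z hz
    refine mul_le_mul_of_nonneg_left ?_ (hhpos z)
    have := pointwise_bound hn hB hmono hγ0 hγ1 hβ hbelow habove hfempty hS hx hz.1 hz.2
    rw [hPdef]
    exact this
  have hmonoI : (∫ z in (0:ℝ)..1, h z * (γ ^ 2 * f S - φ * g z))
      ≤ ∫ z in (0:ℝ)..1, h z * P z :=
    intervalIntegral.integral_mono_on zero_le_one hIL hI3 hpt
  have hLval : (∫ z in (0:ℝ)..1, h z * (γ ^ 2 * f S - φ * g z))
      = γ ^ 2 * f S * ((1 - Real.exp (-φ)) / φ) - ∫ z in (0:ℝ)..1, (φ * h z * g z) := by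
    have hcongr : ∀ z ∈ Set.uIcc (0:ℝ) 1, h z * (γ ^ 2 * f S - φ * g z)
        = γ ^ 2 * f S * h z - φ * h z * g z := fun z _ => by ring
    rw [intervalIntegral.integral_congr hcongr,
      intervalIntegral.integral_sub
        (show IntervalIntegrable (fun z => γ ^ 2 * f S * h z) MeasureTheory.volume 0 1 from
          (continuous_const.mul hconth).intervalIntegrable 0 1) hI1,
      intervalIntegral.integral_const_mul, hexp]
  -- rewrite the goal
  have hgrad : ∀ (y : Elem n → ℝ) (i : Elem n), grad n (ME n B f) y i = Eform n B f i y :=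
    fun y i => pderiv_ME_eq_Eform f i y
  have hgoalR : inner' n (fun i => indVec n B S i - x i)
      (auxGrad n B f (fun z => Real.exp (φ * (z - 1))) x)
      = (∫ z in (0:ℝ)..1, h z * P z) - ∫ z in (0:ℝ)..1, h z * Q z := by
    unfold inner' auxGrad
    have hterm : ∀ i : Elem n, (indVec n B S i - x i) *
        (∫ z in (0:ℝ)..1, Real.exp (φ * (z - 1)) * grad n (ME n B f) (fun j => z * x j) i)
        = ∫ z in (0:ℝ)..1, (indVec n B S i - x i) * (h z * G i z) := by
      intro i
      rw [← intervalIntegral.integral_const_mul]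
      refine intervalIntegral.integral_congr fun z _ => ?_
      rw [hgrad, hhdef, hGdef]
    rw [Finset.sum_congr rfl fun i _ => hterm i]
    rw [← intervalIntegral.integral_finset_sum (fun i _ =>
      show IntervalIntegrable (fun z => (indVec n B S i - x i) * (h z * G i z))
          MeasureTheory.volume 0 1 from
        (continuous_const.mul (hconth.mul (hcontG i))).intervalIntegrable 0 1)]
    rw [← intervalIntegral.integral_sub hI3 hI2]
    refine intervalIntegral.integral_congr fun z _ => ?_
    rw [hPdef, hQdef]
    simp only [Finset.mul_sum, ← Finset.sum_sub_distrib]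
    exact Finset.sum_congr rfl fun i _ => by ring
  rw [hgoalR]
  have hgoalL : γ ^ 2 * (1 - Real.exp (-φ)) / φ * f S
      = γ ^ 2 * f S * ((1 - Real.exp (-φ)) / φ) := by ring
  rw [hgoalL]
  linarith [hmonoI, hadd, hLval]
end Multinoulli
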